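/- For all real numbers L and μ with L > μ > 0, every real step size η, and every natural number t, one has μ·(1−ηL)^{2t} + L·(1−ημ)^{2t} ≥ (μ+L)·((L−μ)/(L+μ))^{2t}. -/

import Mathlib

/-- Tangent line inequality for even powers at a point `c > 0`. -/
lemma tangent_pow (c x : ℝ) (hc : 0 < c) (t : ℕ) :
    c ^ (2 * t) * (1 + (2 * t : ℝ) * (x / c - 1)) ≤ x ^ (2 * t) := by
  rcases Nat.eq_zero_or_pos t with ht | ht
  · subst ht; simp
  rcases le_or_gt (-c) x with hx | hx
  · have ha : (-2 : ℝ) ≤ x / c - 1 := by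
      have : -1 ≤ x / c := by
        rw [le_div_iff₀ hc]; linarith
      linarith
    have h := one_add_mul_le_pow ha (2 * t)
    have hcp : (0 : ℝ) < c ^ (2 * t) := pow_pos hc _
    calc c ^ (2 * t) * (1 + (2 * t : ℝ) * (x / c - 1))
        ≤ c ^ (2 * t) * (x / c) ^ (2 * t) := by
          apply mul_le_mul_of_nonneg_left _ hcp.le
          rw [show x / c = 1 + (x / c - 1) by ring]
          push_cast at h ⊢; linarith
      _ = x ^ (2 * t) := by
          rw [div_pow]
          field_simp
  · have hneg : 1 + (2 * t : ℝ) * (x / c - 1) ≤ 0 := by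
      have h2 : x / c - 1 ≤ -2 := by
        have : x / c ≤ -1 := by
          rw [div_le_iff₀ hc]; linarith
        linarith
      have ht' : (1 : ℝ) ≤ (2 * t : ℝ) := by
        have : (1 : ℕ) ≤ 2 * t := by omega
        exact_mod_cast this
      nlinarith
    have hcp : (0 : ℝ) < c ^ (2 * t) := pow_pos hc _
    have : c ^ (2 * t) * (1 + (2 * t : ℝ) * (x / c - 1)) ≤ 0 :=
      mul_nonpos_of_nonneg_of_nonpos hcp.le hneg
    calc c ^ (2 * t) * (1 + (2 * t : ℝ) * (x / c - 1)) ≤ 0 := this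
      _ ≤ x ^ (2 * t) := (even_two_mul t).pow_nonneg x

/-- For all real numbers `L` and `μ` with `L > μ > 0`, every real step size `η`,
and every natural number `t`, one has
`μ·(1−ηL)^(2t) + L·(1−ημ)^(2t) ≥ (μ+L)·((L−μ)/(L+μ))^(2t)`. -/
theorem gd_scalar_lower_bound (L μ : ℝ) (hLμ : L > μ) (hμ : μ > 0) (η : ℝ) (t : ℕ) :
    μ * (1 - η * L) ^ (2 * t) + L * (1 - η * μ) ^ (2 * t) ≥
      (μ + L) * ((L - μ) / (L + μ)) ^ (2 * t) := by
  set r : ℝ := (L - μ) / (L + μ) with hr_def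
  have hLμ' : (0 : ℝ) < L + μ := by linarith
  have hr : 0 < r := div_pos (by linarith) hLμ'
  have hrc : r * (L + μ) = L - μ := by
    rw [hr_def]; field_simp
  have h1 := tangent_pow r (-(1 - η * L)) hr t
  have h2 := tangent_pow r (1 - η * μ) hr t
  have hneg : (-(1 - η * L)) ^ (2 * t) = (1 - η * L) ^ (2 * t) :=
    (even_two_mul t).neg_pow _
  rw [hneg] at h1
  have hrp : (0 : ℝ) < r ^ (2 * t) := pow_pos hr _
  -- combine: μ * h1 + L * h2
  have key : μ * (1 - η * L) ^ (2 * t) + L * (1 - η * μ) ^ (2 * t) ≥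
      r ^ (2 * t) * (μ * (1 + (2 * t : ℝ) * (-(1 - η * L) / r - 1))
        + L * (1 + (2 * t : ℝ) * ((1 - η * μ) / r - 1))) := by
    have := mul_le_mul_of_nonneg_left h1 hμ.le
    have := mul_le_mul_of_nonneg_left h2 (by linarith : (0:ℝ) ≤ L)
    nlinarith
  have hbr : μ * (1 + (2 * t : ℝ) * (-(1 - η * L) / r - 1))
        + L * (1 + (2 * t : ℝ) * ((1 - η * μ) / r - 1)) = μ + L := by
    have hr0 : r ≠ 0 := ne_of_gt hr
    field_simp
    nlinarith [hrc]
  rw [hbr] at key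
  linarith [key]
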